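/- Let φ : [0,2π] → ℝ be continuously differentiable and nonnegative, let c ≥ 0, and suppose φ(θ)² + φ'(θ)² ≤ max{M², φ(θ₀)² + c} for all θ, where M = φ(θ₀) = max_θ φ(θ). Then for any η ∈ (0,1) and any θ with |θ − θ₀| < η: (1 − η)·φ(θ₀) ≤ φ(θ) + η√c. -/

import Mathlib

open Real

theorem harnack_gradient_estimate
    (φ : ℝ → ℝ) (hφ : ContDiff ℝ 1 φ)
    (hnn : ∀ θ ∈ Set.Icc (0:ℝ) (2 * π), 0 ≤ φ θ)
    (c : ℝ) (hc : 0 ≤ c)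
    (θ₀ : ℝ) (hθ₀ : θ₀ ∈ Set.Icc (0:ℝ) (2 * π))
    (hmax : ∀ θ ∈ Set.Icc (0:ℝ) (2 * π), φ θ ≤ φ θ₀)
    (hbound : ∀ θ ∈ Set.Icc (0:ℝ) (2 * π),
      (φ θ) ^ 2 + (deriv φ θ) ^ 2 ≤ max ((φ θ₀) ^ 2) ((φ θ₀) ^ 2 + c)) :
    ∀ η ∈ Set.Ioo (0:ℝ) 1, ∀ θ ∈ Set.Icc (0:ℝ) (2 * π), |θ - θ₀| < η →
      (1 - η) * φ θ₀ ≤ φ θ + η * Real.sqrt c := by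
  intro η hη θ hθ hdist
  set M := φ θ₀ with hM
  have hM0 : 0 ≤ M := hnn θ₀ hθ₀
  set C := Real.sqrt (M ^ 2 + c) with hC
  -- derivative bound on the interval
  have hderiv : ∀ x ∈ Set.Icc (0:ℝ) (2 * π), ‖deriv φ x‖ ≤ C := by
    intro x hx
    have h1 := hbound x hx
    rw [max_eq_right (le_add_of_nonneg_right hc)] at h1
    have h2 : (deriv φ x) ^ 2 ≤ M ^ 2 + c := by
      nlinarith [sq_nonneg (φ x)]
    rw [Real.norm_eq_abs]
    have := Real.sqrt_le_sqrt h2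
    rwa [Real.sqrt_sq_eq_abs] at this
  have hconv : Convex ℝ (Set.Icc (0:ℝ) (2 * π)) := convex_Icc _ _
  have hdiff : ∀ x ∈ Set.Icc (0:ℝ) (2 * π),
      HasDerivWithinAt φ (deriv φ x) (Set.Icc (0:ℝ) (2 * π)) x := by
    intro x hx
    exact ((hφ.differentiable one_ne_zero x).hasDerivAt).hasDerivWithinAt
  have hmvt := hconv.norm_image_sub_le_of_norm_hasDerivWithin_le hdiff hderiv hθ₀ hθ
  rw [Real.norm_eq_abs, Real.norm_eq_abs] at hmvt
  have hηC : |φ θ - M| ≤ η * C := by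
    calc |φ θ - M| ≤ C * |θ - θ₀| := hmvt
    _ ≤ C * η := by
        exact mul_le_mul_of_nonneg_left hdist.le (Real.sqrt_nonneg _)
    _ = η * C := mul_comm _ _
  have hCle : C ≤ M + Real.sqrt c := by
    have h4 : M ^ 2 + c ≤ (M + Real.sqrt c) ^ 2 := by
      nlinarith [Real.sq_sqrt hc, Real.sqrt_nonneg c]
    calc C ≤ Real.sqrt ((M + Real.sqrt c) ^ 2) := Real.sqrt_le_sqrt h4
    _ = M + Real.sqrt c := Real.sqrt_sq (by positivity)
  have h3 : M - φ θ ≤ η * C := by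
    have := abs_le.mp hηC
    linarith [this.1]
  have hη0 := hη.1
  nlinarith [Real.sqrt_nonneg c]
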